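/- Let d, ℓ ∈ ℕ and T > 0. Let A, σ ∈ ℝ^{d×d}, B ∈ ℝ^{d×ℓ}, C ∈ ℝ^d, let R_x, G ∈ ℝ^{d×d} be symmetric, and let R_u ∈ ℝ^{ℓ×ℓ} be symmetric positive definite. Let P : [0,T] → ℝ^{d×d}, Q : [0,T] → ℝ^d, R : [0,T] → ℝ be differentiable with P(t) symmetric for every t ∈ [0,T], satisfying for all t ∈ [0,T]: P'(t) = Aᵀ P(t) + P(t) A + P(t) B R_u^{-1} Bᵀ P(t) − R_x; Q'(t) = −2 P(t) A C + Aᵀ Q(t) + P(t) B R_u^{-1} Bᵀ Q(t); R'(t) = −Tr(σ σᵀ P(t)) − Q(t)ᵀ A C + (1/4) Q(t)ᵀ B R_u^{-1} Bᵀ Q(t); together with the terminal conditions P(T) = G, Q(T) = 0, R(T) = 0. Define v : [0,T] × ℝ^d → ℝ by v(t,x) := ⟨P(t) x, x⟩ + ⟨Q(t), x⟩ + R(t). Then for all (t,x) ∈ [0,T] × ℝ^d, v satisfies the Hamilton–Jacobi–Bellman equation ∂_t v(t,x) + (1/2) Tr( σ σᵀ Hess_x v(t,x) ) + ⟨∇_x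 v(t,x), A(C − x)⟩ − (1/4) ⟨R_u^{-1} Bᵀ ∇_x v(t,x), Bᵀ ∇_x v(t,x)⟩ + ⟨R_x x, x⟩ = 0, and v(T,x) = ⟨G x, x⟩. -/

import Mathlib

open Matrix

/-- The spatial gradient of `f : ℝ^d → ℝ` at `x`. -/
noncomputable def grad' (d : ℕ) (f : (Fin d → ℝ) → ℝ) (x : Fin d → ℝ) : Fin d → ℝ :=
  fun i => fderiv ℝ f x (Pi.single i 1)

/-- The Hessian matrix of `f : ℝ^d → ℝ` at `x`. -/
noncomputable def hess' (d : ℕ) (f : (Fin d → ℝ) → ℝ) (x : Fin d → ℝ) :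
    Matrix (Fin d) (Fin d) ℝ :=
  Matrix.of fun i j => fderiv ℝ (fun y => fderiv ℝ f y (Pi.single j 1)) x (Pi.single i 1)

lemma dot_move {m n : ℕ} (X : Matrix (Fin m) (Fin n) ℝ) (u : Fin n → ℝ) (w : Fin m → ℝ) :
    (X *ᵥ u) ⬝ᵥ w = u ⬝ᵥ (Xᵀ *ᵥ w) := by
  simp only [dotProduct, mulVec, Finset.sum_mul, Finset.mul_sum, transpose_apply]
  rw [Finset.sum_comm]
  apply Finset.sum_congr rfl; intros; apply Finset.sum_congr rfl; intros; ring

lemma dot_sym {m n : ℕ} (X : Matrix (Fin m) (Fin n) ℝ) (u : Fin m → ℝ) (w : Fin n → ℝ) :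
    u ⬝ᵥ (X *ᵥ w) = w ⬝ᵥ (Xᵀ *ᵥ u) := by
  rw [← dot_move, dotProduct_comm]

lemma quad_hasFDerivAt {d : ℕ} (M : Matrix (Fin d) (Fin d) ℝ) (q : Fin d → ℝ) (c : ℝ)
    (x : Fin d → ℝ) :
    HasFDerivAt (fun y : Fin d → ℝ => M.mulVec y ⬝ᵥ y + q ⬝ᵥ y + c)
      ((∑ i, ∑ j, M i j • ((x j) • (ContinuousLinearMap.proj i : (Fin d → ℝ) →L[ℝ] ℝ)
          + (x i) • (ContinuousLinearMap.proj j : (Fin d → ℝ) →L[ℝ] ℝ)))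
        + ∑ i, q i • (ContinuousLinearMap.proj i : (Fin d → ℝ) →L[ℝ] ℝ)) x := by
  have h1 : HasFDerivAt (fun y : Fin d → ℝ => M.mulVec y ⬝ᵥ y)
      (∑ i, ∑ j, M i j • ((x j) • (ContinuousLinearMap.proj i : (Fin d → ℝ) →L[ℝ] ℝ)
          + (x i) • (ContinuousLinearMap.proj j : (Fin d → ℝ) →L[ℝ] ℝ))) x := by
    have : (fun y : Fin d → ℝ => M.mulVec y ⬝ᵥ y)
        = fun y => ∑ i, ∑ j, M i j * (y j * y i) := by
      funext y
      simp only [dotProduct, mulVec, Finset.sum_mul]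
      exact Finset.sum_congr rfl fun i _ => Finset.sum_congr rfl fun j _ => by ring
    rw [this]
    apply HasFDerivAt.fun_sum; intro i _
    apply HasFDerivAt.fun_sum; intro j _
    have hj : HasFDerivAt (fun y : Fin d → ℝ => y j)
        (ContinuousLinearMap.proj j : (Fin d → ℝ) →L[ℝ] ℝ) x :=
      (ContinuousLinearMap.proj j : (Fin d → ℝ) →L[ℝ] ℝ).hasFDerivAt
    have hi : HasFDerivAt (fun y : Fin d → ℝ => y i)
        (ContinuousLinearMap.proj i : (Fin d → ℝ) →L[ℝ] ℝ) x :=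
      (ContinuousLinearMap.proj i : (Fin d → ℝ) →L[ℝ] ℝ).hasFDerivAt
    have := (hj.fun_mul hi).const_mul (M i j)
    convert this using 1
  have h2 : HasFDerivAt (fun y : Fin d → ℝ => q ⬝ᵥ y)
      (∑ i, q i • (ContinuousLinearMap.proj i : (Fin d → ℝ) →L[ℝ] ℝ)) x := by
    have : (fun y : Fin d → ℝ => q ⬝ᵥ y) = fun y => ∑ i, q i * y i := by
      funext y; rfl
    rw [this]
    apply HasFDerivAt.fun_sum; intro i _
    exact ((ContinuousLinearMap.proj i : (Fin d → ℝ) →L[ℝ] ℝ).hasFDerivAt).const_mul (q i)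
  exact (h1.add h2).add_const c

lemma quad_fderiv_apply {d : ℕ} (M : Matrix (Fin d) (Fin d) ℝ) (q : Fin d → ℝ) (c : ℝ)
    (x : Fin d → ℝ) (k : Fin d) :
    fderiv ℝ (fun y : Fin d → ℝ => M.mulVec y ⬝ᵥ y + q ⬝ᵥ y + c) x (Pi.single k 1)
      = (Mᵀ *ᵥ x + M *ᵥ x + q) k := by
  rw [(quad_hasFDerivAt M q c x).fderiv]
  simp only [ContinuousLinearMap.add_apply, ContinuousLinearMap.sum_apply,
    ContinuousLinearMap.smul_apply, ContinuousLinearMap.proj_apply, smul_eq_mul,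
    Pi.single_apply, Pi.add_apply, mulVec, dotProduct, transpose_apply]
  simp [Finset.mul_sum, mul_ite, ite_mul, Finset.sum_ite_eq, Finset.sum_ite_eq',
    Finset.sum_add_distrib, mul_comm]
  rw [show (∑ i : Fin d, ∑ j : Fin d, M i j * ((if i = k then x j else 0) + if j = k then x i else 0))
      = ∑ i : Fin d, ∑ j : Fin d, ((if i = k then M i j * x j else 0) + (if j = k then M i j * x i else 0)) from
    Finset.sum_congr rfl fun i _ => Finset.sum_congr rfl fun j _ => by split_ifs <;> ring]
  simp [Finset.sum_add_distrib, Finset.sum_ite_eq, Finset.sum_ite_eq']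
  rw [add_comm]

lemma lin_hasFDerivAt {d : ℕ} (w : Fin d → ℝ) (c : ℝ) (x : Fin d → ℝ) :
    HasFDerivAt (fun y : Fin d → ℝ => w ⬝ᵥ y + c)
      (∑ i, w i • (ContinuousLinearMap.proj i : (Fin d → ℝ) →L[ℝ] ℝ)) x := by
  have : (fun y : Fin d → ℝ => w ⬝ᵥ y + c) = fun y => (∑ i, w i * y i) + c := by
    funext y; rfl
  rw [this]
  exact (HasFDerivAt.fun_sum fun i _ =>
    ((ContinuousLinearMap.proj i : (Fin d → ℝ) →L[ℝ] ℝ).hasFDerivAt).const_mul (w i)).add_const c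

lemma lin_fderiv_apply {d : ℕ} (w : Fin d → ℝ) (c : ℝ) (x : Fin d → ℝ) (i : Fin d) :
    fderiv ℝ (fun y : Fin d → ℝ => w ⬝ᵥ y + c) x (Pi.single i 1) = w i := by
  rw [(lin_hasFDerivAt w c x).fderiv]
  simp [ContinuousLinearMap.sum_apply, Pi.single_apply, Finset.sum_ite_eq, mul_ite]

lemma quad_hess {d : ℕ} (M : Matrix (Fin d) (Fin d) ℝ) (q : Fin d → ℝ) (c : ℝ)
    (x : Fin d → ℝ) (i j : Fin d) :
    fderiv ℝ (fun y : Fin d → ℝ =>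
        fderiv ℝ (fun z : Fin d → ℝ => M.mulVec z ⬝ᵥ z + q ⬝ᵥ z + c) y (Pi.single j 1))
      x (Pi.single i 1) = M i j + M j i := by
  have h : (fun y : Fin d → ℝ =>
      fderiv ℝ (fun z : Fin d → ℝ => M.mulVec z ⬝ᵥ z + q ⬝ᵥ z + c) y (Pi.single j 1))
      = fun y => (fun k => M k j + M j k) ⬝ᵥ y + q j := by
    funext y
    rw [quad_fderiv_apply]
    simp only [Pi.add_apply, mulVec, dotProduct, transpose_apply]
    rw [← Finset.sum_add_distrib]
    congr 1
    exact Finset.sum_congr rfl fun k _ => by ring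
  rw [h, lin_fderiv_apply]

/-- If `(P, Q, R)` solve the Riccati system with terminal data `(G, 0, 0)`, then
`v(t,x) = ⟨P(t)x, x⟩ + ⟨Q(t), x⟩ + R(t)` solves the HJB equation of the LQG control
problem and satisfies the terminal condition `v(T,x) = ⟨Gx, x⟩`. -/
theorem riccati_solves_LQG_HJB
    (d ℓ : ℕ) (T : ℝ) (hT : 0 < T)
    (A σ : Matrix (Fin d) (Fin d) ℝ) (B : Matrix (Fin d) (Fin ℓ) ℝ) (C : Fin d → ℝ)
    (Rx G : Matrix (Fin d) (Fin d) ℝ) (hRx : Rx.IsSymm) (hG : G.IsSymm)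
    (Ru : Matrix (Fin ℓ) (Fin ℓ) ℝ) (hRu : Ru.PosDef)
    (P : ℝ → Matrix (Fin d) (Fin d) ℝ) (Q : ℝ → Fin d → ℝ) (R : ℝ → ℝ)
    (hPsymm : ∀ t ∈ Set.Icc (0 : ℝ) T, (P t).IsSymm)
    (hP : ∀ t ∈ Set.Icc (0 : ℝ) T, ∀ i j, HasDerivAt (fun s => P s i j)
      ((Aᵀ * P t + P t * A + P t * B * Ru⁻¹ * Bᵀ * P t - Rx) i j) t)
    (hQ : ∀ t ∈ Set.Icc (0 : ℝ) T, ∀ i, HasDerivAt (fun s => Q s i)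
      ((-((2 : ℝ) • (P t).mulVec (A.mulVec C)) + Aᵀ.mulVec (Q t)
        + (P t * B * Ru⁻¹ * Bᵀ).mulVec (Q t)) i) t)
    (hR : ∀ t ∈ Set.Icc (0 : ℝ) T, HasDerivAt R
      (-Matrix.trace (σ * σᵀ * P t) - Q t ⬝ᵥ A.mulVec C
        + 1 / 4 * (Q t ⬝ᵥ (B * Ru⁻¹ * Bᵀ).mulVec (Q t))) t)
    (hPT : P T = G) (hQT : Q T = 0) (hRT : R T = 0)
    (v : ℝ → (Fin d → ℝ) → ℝ)
    (hv : v = fun t x => (P t).mulVec x ⬝ᵥ x + Q t ⬝ᵥ x + R t) :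
    (∀ t ∈ Set.Icc (0 : ℝ) T, ∀ x : Fin d → ℝ,
      deriv (fun s => v s x) t
          + 1 / 2 * Matrix.trace (σ * σᵀ * hess' d (v t) x)
          + grad' d (v t) x ⬝ᵥ A.mulVec (C - x)
          - 1 / 4 * (Ru⁻¹.mulVec (Bᵀ.mulVec (grad' d (v t) x))
              ⬝ᵥ Bᵀ.mulVec (grad' d (v t) x))
          + Rx.mulVec x ⬝ᵥ x = 0) ∧
    (∀ x : Fin d → ℝ, v T x = G.mulVec x ⬝ᵥ x) := by
  subst hv
  constructor
  · intro t ht x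
    have hsym : (P t)ᵀ = P t := hPsymm t ht
    have hRuSymm : Ruᵀ = Ru := by
      have := hRu.1
      rwa [Matrix.IsHermitian, Matrix.conjTranspose_eq_transpose_of_trivial] at this
    have hRuInv : (Ru⁻¹)ᵀ = Ru⁻¹ := by rw [Matrix.transpose_nonsing_inv, hRuSymm]
    -- time derivative
    have h1 : HasDerivAt (fun s => ((P s) *ᵥ x) ⬝ᵥ x)
        (((Aᵀ * P t + P t * A + P t * B * Ru⁻¹ * Bᵀ * P t - Rx) *ᵥ x) ⬝ᵥ x) t := by
      simp only [Matrix.mulVec, dotProduct]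
      exact HasDerivAt.fun_sum fun i _ =>
        (HasDerivAt.fun_sum fun j _ => (hP t ht i j).mul_const (x j)).mul_const (x i)
    have h2 : HasDerivAt (fun s => Q s ⬝ᵥ x)
        ((-((2 : ℝ) • (P t).mulVec (A.mulVec C)) + Aᵀ.mulVec (Q t)
          + (P t * B * Ru⁻¹ * Bᵀ).mulVec (Q t)) ⬝ᵥ x) t := by
      simp only [dotProduct]
      exact HasDerivAt.fun_sum fun i _ => (hQ t ht i).mul_const (x i)
    have hD := (h1.add h2).add (hR t ht)
    have hderiv : deriv (fun s => ((P s) *ᵥ x) ⬝ᵥ x + Q s ⬝ᵥ x + R s)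
        = deriv (fun s => (((P s) *ᵥ x) ⬝ᵥ x + Q s ⬝ᵥ x) + R s) := rfl
    rw [show (fun s => ((fun t x => (P t).mulVec x ⬝ᵥ x + Q t ⬝ᵥ x + R t) s x)) =
      (fun s => (((P s) *ᵥ x) ⬝ᵥ x + Q s ⬝ᵥ x) + R s) from rfl,
      (show HasDerivAt (fun s => (((P s) *ᵥ x) ⬝ᵥ x + Q s ⬝ᵥ x) + R s) _ t from hD).deriv]
    -- gradient
    have hgrad : grad' d ((fun t x => (P t).mulVec x ⬝ᵥ x + Q t ⬝ᵥ x + R t) t) x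
        = (P t)ᵀ *ᵥ x + P t *ᵥ x + Q t := by
      funext k
      simp only [grad']
      exact quad_fderiv_apply (P t) (Q t) (R t) x k
    -- hessian
    have hhess : hess' d ((fun t x => (P t).mulVec x ⬝ᵥ x + Q t ⬝ᵥ x + R t) t) x
        = P t + (P t)ᵀ := by
      ext i j
      simp only [hess', Matrix.of_apply, Matrix.add_apply, Matrix.transpose_apply]
      exact quad_hess (P t) (Q t) (R t) x i j
    rw [hgrad, hhess, hsym]
    simp only [Matrix.add_mulVec, Matrix.sub_mulVec, Matrix.mulVec_add, Matrix.mulVec_sub,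
      Matrix.neg_mulVec, Matrix.smul_mulVec, ← Matrix.mulVec_mulVec,
      add_dotProduct, sub_dotProduct, neg_dotProduct,
      smul_dotProduct, dotProduct_add, dotProduct_sub,
      dotProduct_neg, dotProduct_smul, Matrix.mul_add, Matrix.trace_add,
      dot_move, Matrix.transpose_transpose, hsym, smul_eq_mul, hRuInv]
    have e1 : x ⬝ᵥ Aᵀ *ᵥ P t *ᵥ x = x ⬝ᵥ P t *ᵥ A *ᵥ x := by
      rw [dot_sym, Matrix.transpose_transpose, dot_move, hsym]
    have e2 : C ⬝ᵥ Aᵀ *ᵥ P t *ᵥ x = x ⬝ᵥ P t *ᵥ A *ᵥ C := by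
      rw [dot_sym, Matrix.transpose_transpose, dot_move, hsym]
    have e3 : Q t ⬝ᵥ B *ᵥ Ru⁻¹ *ᵥ Bᵀ *ᵥ P t *ᵥ x = x ⬝ᵥ P t *ᵥ B *ᵥ Ru⁻¹ *ᵥ Bᵀ *ᵥ Q t := by
      rw [dot_sym, dot_move, hRuInv, dot_move, Matrix.transpose_transpose, dot_move, hsym]
    rw [e1, e2, e3]
    ring
  · intro x
    simp [hPT, hQT, hRT]
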